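/- arXiv:1601.05159 — 13 statements merged into one kernel-verified Lean document; each statement's English description precedes it below -/
import Mathlib

section
/- In a bi-gyrogroupoid B, if a is a left inverse of b (i.e., a⊕b = 0), then lgyr[a,b] = id and rgyr[a,b] = id. -/
/-- A bi-gyrogroupoid: a set `β` with a binary operation `add`, an identity `zero`,
and two families of gyrations `lgyr`, `rgyr` satisfying axioms (BG1)–(BG5). -/
structure IsBiGyrogroupoid {β : Type*} (add : β → β → β) (zero : β)
    (lgyr rgyr : β → β → β → β) : Prop where
  /-- (BG1) `zero` is a two-sided identity. -/
  zero_add : ∀ a, add zero a = a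
  add_zero : ∀ a, add a zero = a
  /-- (BG2) every element has a left inverse. -/
  exists_left_inv : ∀ a, ∃ b, add b a = zero
  /-- (BG3) gyrations are automorphisms of `(β, add)`. -/
  lgyr_bijective : ∀ a b, Function.Bijective (lgyr a b)
  rgyr_bijective : ∀ a b, Function.Bijective (rgyr a b)
  lgyr_add : ∀ a b x y, lgyr a b (add x y) = add (lgyr a b x) (lgyr a b y)
  rgyr_add : ∀ a b x y, rgyr a b (add x y) = add (rgyr a b x) (rgyr a b y)
  /-- (BG3) the bi-gyroassociative law. -/
  bgassoc : ∀ a b c, add (add a b) (lgyr a b c) = add (rgyr b c a) (add b c)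
  /-- (BG4a) -/
  rgyr_red : ∀ a b, rgyr a b = rgyr (lgyr a b a) (add a b)
  /-- (BG4b) -/
  lgyr_red : ∀ a b, lgyr a b = lgyr (lgyr a b a) (add a b)
  /-- (BG5) -/
  lgyr_zero : ∀ a, lgyr a zero = id
  rgyr_zero : ∀ a, rgyr a zero = id

/-- If a is a left inverse of b, then the gyrations generated by (a, b) are trivial. -/
theorem biGyrogroupoid_gyr_left_inv {β : Type*} (add : β → β → β) (zero : β)
    (lgyr rgyr : β → β → β → β)
    (h : IsBiGyrogroupoid add zero lgyr rgyr) :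
    ∀ a b, add a b = zero → lgyr a b = id ∧ rgyr a b = id := by
  intro a b hab
  constructor
  · rw [h.lgyr_red a b, hab, h.lgyr_zero]
  · rw [h.rgyr_red a b, hab, h.rgyr_zero]
end

section
/- In a bi-gyrogroupoid, every left inverse is also a right inverse: if b⊕a = 0 then a⊕b = 0. -/
/-- If `x ⊕ a = 0`, then both gyrations `lgyr[x,a]` and `rgyr[x,a]` are the identity. -/
theorem biGyrogroupoid_gyr_of_left_inv {β : Type*} (add : β → β → β) (zero : β)
    (lgyr rgyr : β → β → β → β)
    (h : IsBiGyrogroupoid add zero lgyr rgyr) :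
    ∀ x a, add x a = zero → lgyr x a = id ∧ rgyr x a = id := by
  intro x a hxa
  constructor
  · rw [h.lgyr_red x a, hxa, h.lgyr_zero]
  · rw [h.rgyr_red x a, hxa, h.rgyr_zero]

/-- In a bi-gyrogroupoid, every left inverse is also a right inverse. -/
theorem biGyrogroupoid_left_inv_right_inv {β : Type*} (add : β → β → β) (zero : β)
    (lgyr rgyr : β → β → β → β)
    (h : IsBiGyrogroupoid add zero lgyr rgyr) :
    ∀ a b, add b a = zero → add a b = zero := by
  intro a b hba
  obtain ⟨hl, hr⟩ := biGyrogroupoid_gyr_of_left_inv add zero lgyr rgyr h b a hba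
  obtain ⟨c, hcb⟩ := h.exists_left_inv b
  obtain ⟨hl', _⟩ := biGyrogroupoid_gyr_of_left_inv add zero lgyr rgyr h c b hcb
  have key := h.bgassoc c b a
  rw [hcb, h.zero_add, hl', hr, hba, h.add_zero] at key
  simp only [id] at key
  rw [key, hcb]
end

section
/- Every element of a bi-gyrogroupoid has a unique two-sided inverse. -/
/-- Every element of a bi-gyrogroupoid has a unique two-sided inverse. -/
theorem biGyrogroupoid_unique_inverse {β : Type*} (add : β → β → β) (zero : β)
    (lgyr rgyr : β → β → β → β)
    (h : IsBiGyrogroupoid add zero lgyr rgyr) :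
    ∀ a, ∃! b, add b a = zero ∧ add a b = zero := by
  -- gyrations with a left-inverse pair are trivial
  have hlid : ∀ b a, add b a = zero → lgyr b a = id := by
    intro b a hba
    rw [h.lgyr_red b a, hba, h.lgyr_zero]
  have hrid : ∀ b a, add b a = zero → rgyr b a = id := by
    intro b a hba
    rw [h.rgyr_red b a, hba, h.rgyr_zero]
  -- key identity: if b ⊕ a = 0 then ∀ c, rgyr[a,c]b ⊕ (a ⊕ c) = c
  have star : ∀ b a, add b a = zero → ∀ c, add (rgyr a c b) (add a c) = c := by
    intro b a hba c
    have := h.bgassoc b a c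
    rw [hba, h.zero_add, hlid b a hba] at this
    exact this.symm
  intro a
  obtain ⟨b, hba⟩ := h.exists_left_inv a
  -- b is also a right inverse
  obtain ⟨c, hcb⟩ := h.exists_left_inv b
  have hca : c = a := by
    have := star c b hcb a
    rw [hba, h.add_zero, hrid b a hba] at this
    exact this
  have hab : add a b = zero := hca ▸ hcb
  refine ⟨b, ⟨hba, hab⟩, ?_⟩
  rintro b' ⟨-, hab'⟩
  have := star b a hba b'
  rw [hab', h.add_zero, hrid a b' hab'] at this
  exact this.symm
end

section
/- In a bi-gyrogroupoid B with unique inverses denoted ⊖, the left cancellation law ⊖rgyr[a,b](a)⊕(a⊕b) = b and the right cancellation law (a⊕b)⊖lgyr[a,b](b) = a hold for all a, b ∈ B. -/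
/-- The left and right cancellation laws in a bi-gyrogroupoid, where `neg a` is
the (unique) two-sided inverse of `a`. -/
theorem biGyrogroupoid_cancellation {β : Type*} (add : β → β → β) (zero : β)
    (lgyr rgyr : β → β → β → β) (neg : β → β)
    (h : IsBiGyrogroupoid add zero lgyr rgyr)
    (hneg : ∀ a, add (neg a) a = zero ∧ add a (neg a) = zero) :
    ∀ a b, add (neg (rgyr a b a)) (add a b) = b ∧
      add (add a b) (neg (lgyr a b b)) = a := by
  -- automorphisms fix zero
  have lgyr_fix0 : ∀ a b, lgyr a b zero = zero := by
    intro a b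
    obtain ⟨y, hy⟩ := (h.lgyr_bijective a b).2 zero
    have := h.lgyr_add a b zero y
    rw [h.zero_add, hy, h.add_zero] at this
    exact this.symm
  have rgyr_fix0 : ∀ a b, rgyr a b zero = zero := by
    intro a b
    obtain ⟨y, hy⟩ := (h.rgyr_bijective a b).2 zero
    have := h.rgyr_add a b zero y
    rw [h.zero_add, hy, h.add_zero] at this
    exact this.symm
  -- gyrations with second-argument-relation neg are trivial
  have lgyr_neg : ∀ a, lgyr (neg a) a = id := by
    intro a
    rw [h.lgyr_red (neg a) a, (hneg a).1, h.lgyr_zero]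
  have rgyr_neg : ∀ a, rgyr (neg a) a = id := by
    intro a
    rw [h.rgyr_red (neg a) a, (hneg a).1, h.rgyr_zero]
  -- pre-form of left cancellation
  have lcancel : ∀ a b, add (rgyr a b (neg a)) (add a b) = b := by
    intro a b
    have := h.bgassoc (neg a) a b
    rw [(hneg a).1, h.zero_add, lgyr_neg a] at this
    exact this.symm
  -- uniqueness of right inverse
  have inv_unique : ∀ c u, add c u = zero → u = neg c := by
    intro c u hcu
    have hgyr : rgyr c u = id := by
      rw [h.rgyr_red c u, hcu, h.rgyr_zero]
    have := lcancel c u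
    rw [hgyr, hcu, h.add_zero] at this
    exact this.symm
  -- automorphisms commute with neg
  have lgyr_comm_neg : ∀ a b c, lgyr a b (neg c) = neg (lgyr a b c) := by
    intro a b c
    apply inv_unique
    rw [← h.lgyr_add, (hneg c).2, lgyr_fix0]
  have rgyr_comm_neg : ∀ a b c, rgyr a b (neg c) = neg (rgyr a b c) := by
    intro a b c
    apply inv_unique
    rw [← h.rgyr_add, (hneg c).2, rgyr_fix0]
  intro a b
  constructor
  · have := lcancel a b
    rwa [rgyr_comm_neg] at this
  · have := h.bgassoc a b (neg b)
    rw [(hneg b).2, h.add_zero] at this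
    rw [h.rgyr_red b (neg b), (hneg b).2, h.rgyr_zero] at this
    rw [lgyr_comm_neg] at this
    simpa using this
end

section
/- In a bi-gyrogroupoid, lgyr[a,⊖a] = lgyr[⊖a,a] = rgyr[a,⊖a] = rgyr[⊖a,a] = id for all a. -/
/-- In a bi-gyrogroupoid, gyrations generated by an element and its inverse are trivial. -/
theorem biGyrogroupoid_gyr_neg_self {β : Type*} (add : β → β → β) (zero : β)
    (lgyr rgyr : β → β → β → β) (neg : β → β)
    (h : IsBiGyrogroupoid add zero lgyr rgyr)
    (hneg : ∀ a, add (neg a) a = zero ∧ add a (neg a) = zero) :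
    ∀ a, lgyr a (neg a) = id ∧ lgyr (neg a) a = id ∧
      rgyr a (neg a) = id ∧ rgyr (neg a) a = id := by
  intro a
  obtain ⟨h1, h2⟩ := hneg a
  refine ⟨?_, ?_, ?_, ?_⟩
  · rw [h.lgyr_red a (neg a), h2, h.lgyr_zero]
  · rw [h.lgyr_red (neg a) a, h1, h.lgyr_zero]
  · rw [h.rgyr_red a (neg a), h2, h.rgyr_zero]
  · rw [h.rgyr_red (neg a) a, h1, h.rgyr_zero]
end

section
/- Let B be a bi-gyrogroupoid such that for all a,b: (i) lgyr[a,b] and rgyr[a,b] commute; (ii) lgyr[a,b]⁻¹ = lgyr[⊖b,⊖a] and rgyr[a,b]⁻¹ = rgyr[⊖b,⊖a]; (iii) ⊖(a⊕b) = (lgyr[a,b]∘rgyr[a,b])(⊖b⊖a). If B is bi-gyrocommutative (a⊕b = (lgyr[a,b]∘rgyr[a,b])(b⊕a) for all a,b), then B has the automorphic inverse property ⊖(a⊕b) = ⊖a⊕⊖b. Conversely, if B satisfies the bi-gyration inversion law lgyr[a,b]⁻¹ = lgyr[b,a], rgyr[a,b]⁻¹ = rgyr[b,a] and the automorphic inverse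 property, then B is bi-gyrocommutative. -/
/-- Under hypotheses (i)–(iii), bi-gyrocommutativity implies the automorphic inverse
property; conversely, under the bi-gyration inversion law, the automorphic inverse
property implies bi-gyrocommutativity. -/
theorem biGyrogroupoid_bigyrocomm_iff_aip {β : Type*} (add : β → β → β) (zero : β)
    (lgyr rgyr : β → β → β → β) (neg : β → β)
    (h : IsBiGyrogroupoid add zero lgyr rgyr)
    (hneg : ∀ a, add (neg a) a = zero ∧ add a (neg a) = zero)
    (h1 : ∀ a b x, lgyr a b (rgyr a b x) = rgyr a b (lgyr a b x))
    (h2 : ∀ a b x, (lgyr (neg b) (neg a) (lgyr a b x) = x ∧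
        lgyr a b (lgyr (neg b) (neg a) x) = x) ∧
      (rgyr (neg b) (neg a) (rgyr a b x) = x ∧
        rgyr a b (rgyr (neg b) (neg a) x) = x))
    (h3 : ∀ a b, neg (add a b) = lgyr a b (rgyr a b (add (neg b) (neg a)))) :
    ((∀ a b, add a b = lgyr a b (rgyr a b (add b a))) →
      (∀ a b, neg (add a b) = add (neg a) (neg b))) ∧
    ((∀ a b x, (lgyr b a (lgyr a b x) = x ∧ lgyr a b (lgyr b a x) = x) ∧
        (rgyr b a (rgyr a b x) = x ∧ rgyr a b (rgyr b a x) = x)) →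
      (∀ a b, neg (add a b) = add (neg a) (neg b)) →
      (∀ a b, add a b = lgyr a b (rgyr a b (add b a)))) := by
  -- lgyr (neg a) a = id
  have hlid : ∀ a x, lgyr (neg a) a x = x := by
    intro a x
    have := h.lgyr_red (neg a) a
    rw [(hneg a).1, h.lgyr_zero] at this
    simp [this]
  -- key cancellation identity: c = rgyr a c (neg a) ⊕ (a ⊕ c)
  have key : ∀ a c, c = add (rgyr a c (neg a)) (add a c) := by
    intro a c
    have := h.bgassoc (neg a) a c
    rw [(hneg a).1, h.zero_add, hlid] at this
    exact this
  -- uniqueness of right inverses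
  have huniq : ∀ a u, add a u = zero → u = neg a := by
    intro a u hu
    have hk := key a u
    rw [hu, h.add_zero] at hk
    have hr : rgyr a u = id := by
      have := h.rgyr_red a u
      rw [hu, h.rgyr_zero] at this
      exact this
    rw [hr] at hk
    exact hk
  have hnn : ∀ a, neg (neg a) = a := fun a => (huniq (neg a) a (hneg a).1).symm
  have hninj : ∀ a b, neg a = neg b → a = b := by
    intro a b hab
    rw [← hnn a, ← hnn b, hab]
  -- gyrations fix zero
  have hlz : ∀ a b, lgyr a b zero = zero := by
    intro a b
    obtain ⟨w, hw⟩ := (h.lgyr_bijective a b).2 zero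
    have : lgyr a b (add w zero) = add (lgyr a b w) (lgyr a b zero) := h.lgyr_add a b w zero
    rw [h.add_zero, hw, h.zero_add] at this
    exact this.symm
  have hrz : ∀ a b, rgyr a b zero = zero := by
    intro a b
    obtain ⟨w, hw⟩ := (h.rgyr_bijective a b).2 zero
    have : rgyr a b (add w zero) = add (rgyr a b w) (rgyr a b zero) := h.rgyr_add a b w zero
    rw [h.add_zero, hw, h.zero_add] at this
    exact this.symm
  -- gyrations commute with neg
  have hlneg : ∀ a b x, lgyr a b (neg x) = neg (lgyr a b x) := by
    intro a b x
    refine huniq _ _ ?_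
    rw [← h.lgyr_add, (hneg x).2, hlz]
  have hrneg : ∀ a b x, rgyr a b (neg x) = neg (rgyr a b x) := by
    intro a b x
    refine huniq _ _ ?_
    rw [← h.rgyr_add, (hneg x).2, hrz]
  constructor
  · -- bi-gyrocommutativity → AIP
    intro hbc a b
    have e1 := h3 a b
    have e2 := hbc (neg b) (neg a)
    rw [e2, h1 (neg b) (neg a), (h2 a b _).2.2, (h2 a b _).1.2] at e1
    exact e1
  · -- inversion law + AIP → bi-gyrocommutativity
    intro _ haip a b
    apply hninj
    have e1 := h3 a b
    have : add (neg b) (neg a) = neg (add b a) := (haip b a).symm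
    rw [this, hrneg, hlneg] at e1
    exact e1
end

section
/- Let B be a bi-gyrotransversal of subgroups H_L and H_R in a group Γ containing the identity 1. Then H_L H_R is a subgroup of Γ in which both H_L and H_R are normal, H_L ∩ H_R = {1}, and H_L H_R is isomorphic to the direct product H_L × H_R. -/
/-- If `B` is a bi-gyrotransversal of subgroups `HL` and `HR` in a group `Γ` containing
the identity, then `HL HR` is a subgroup of `Γ`, `HL` and `HR` are normal in it,
`HL ∩ HR = {1}`, and `HL HR ≅ HL × HR`. -/
theorem biGyrotransversal_HLHR_subgroup {Γ : Type*} [Group Γ]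
    (HL HR : Subgroup Γ) (B : Set Γ)
    -- B is a bi-transversal of HL and HR in Γ:
    (uniq : ∀ g : Γ, ∃! t : Γ × Γ × Γ,
      t.1 ∈ HL ∧ t.2.1 ∈ B ∧ t.2.2 ∈ HR ∧ g = t.1 * t.2.1 * t.2.2)
    -- HL and HR normalize B:
    (normL : ∀ h ∈ HL, ∀ b ∈ B, h * b * h⁻¹ ∈ B)
    (normR : ∀ h ∈ HR, ∀ b ∈ B, h * b * h⁻¹ ∈ B)
    -- elements of HL commute with elements of HR:
    (comm : ∀ x ∈ HL, ∀ y ∈ HR, x * y = y * x)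
    -- B contains the identity:
    (one_mem : (1 : Γ) ∈ B) :
    ∃ K : Subgroup Γ, (K : Set Γ) = {g : Γ | ∃ x ∈ HL, ∃ y ∈ HR, g = x * y} ∧
      (∀ k ∈ K, ∀ h ∈ HL, k * h * k⁻¹ ∈ HL) ∧
      (∀ k ∈ K, ∀ h ∈ HR, k * h * k⁻¹ ∈ HR) ∧
      HL ⊓ HR = ⊥ ∧
      Nonempty (K ≃* HL × HR) := by
  -- triviality of the intersection
  have triv : ∀ g : Γ, g ∈ HL → g ∈ HR → g = 1 := by
    intro g hL hR
    obtain ⟨t, _, huniq⟩ := uniq g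
    have h1 : ((g, 1, 1) : Γ × Γ × Γ) = t :=
      huniq (g, 1, 1) ⟨hL, one_mem, HR.one_mem, by group⟩
    have h2 : ((1, 1, g) : Γ × Γ × Γ) = t :=
      huniq (1, 1, g) ⟨HL.one_mem, one_mem, hR, by group⟩
    have := h1.trans h2.symm
    exact congrArg Prod.fst this
  -- the subgroup K = HL * HR
  refine ⟨{
    carrier := {g : Γ | ∃ x ∈ HL, ∃ y ∈ HR, g = x * y}
    one_mem' := ⟨1, HL.one_mem, 1, HR.one_mem, by group⟩
    mul_mem' := by
      rintro a b ⟨x1, hx1, y1, hy1, rfl⟩ ⟨x2, hx2, y2, hy2, rfl⟩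
      refine ⟨x1 * x2, HL.mul_mem hx1 hx2, y1 * y2, HR.mul_mem hy1 hy2, ?_⟩
      have := comm x2 hx2 y1 hy1
      calc x1 * y1 * (x2 * y2) = x1 * (y1 * x2) * y2 := by group
        _ = x1 * (x2 * y1) * y2 := by rw [← this]
        _ = x1 * x2 * (y1 * y2) := by group
    inv_mem' := by
      rintro a ⟨x, hx, y, hy, rfl⟩
      refine ⟨x⁻¹, HL.inv_mem hx, y⁻¹, HR.inv_mem hy, ?_⟩
      have := comm x⁻¹ (HL.inv_mem hx) y⁻¹ (HR.inv_mem hy)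
      rw [mul_inv_rev, ← this]
  }, rfl, ?_, ?_, ?_, ?_⟩
  · rintro k ⟨x, hx, y, hy, rfl⟩ h hh
    have hyh : y * h = h * y := (comm h hh y hy).symm
    have : x * y * h * (x * y)⁻¹ = x * h * x⁻¹ := by
      rw [mul_assoc x y h, hyh]; group
    rw [this]
    exact HL.mul_mem (HL.mul_mem hx hh) (HL.inv_mem hx)
  · rintro k ⟨x, hx, y, hy, rfl⟩ h hh
    have hxh : x * (y * h * y⁻¹) = (y * h * y⁻¹) * x :=
      comm x hx _ (HR.mul_mem (HR.mul_mem hy hh) (HR.inv_mem hy))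
    have : x * y * h * (x * y)⁻¹ = (y * h * y⁻¹) := by
      have := hxh
      calc x * y * h * (x * y)⁻¹ = x * (y * h * y⁻¹) * x⁻¹ := by group
        _ = (y * h * y⁻¹) * x * x⁻¹ := by rw [hxh]
        _ = y * h * y⁻¹ := by group
    rw [this]
    exact HR.mul_mem (HR.mul_mem hy hh) (HR.inv_mem hy)
  · ext g
    simp only [Subgroup.mem_inf, Subgroup.mem_bot]
    exact ⟨fun ⟨h1, h2⟩ => triv g h1 h2, fun h => h ▸ ⟨HL.one_mem, HR.one_mem⟩⟩
  · -- the isomorphism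
    refine ⟨MulEquiv.symm (MulEquiv.ofBijective
      ({ toFun := fun p => ⟨(p.1 : Γ) * p.2, p.1, p.1.2, p.2, p.2.2, rfl⟩
         map_one' := by ext; simp
         map_mul' := by
           rintro ⟨a1, a2⟩ ⟨b1, b2⟩
           ext
           simp only [Subgroup.coe_mul, Submonoid.mk_mul_mk]
           push_cast
           have := comm (b1 : Γ) b1.2 (a2 : Γ) a2.2
           calc (a1 : Γ) * b1 * (a2 * b2) = a1 * (b1 * a2) * b2 := by group
             _ = a1 * (a2 * b1) * b2 := by rw [this]
             _ = a1 * a2 * (b1 * b2) := by group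
       } : HL × HR →* _) ?_)⟩
    constructor
    · rintro ⟨a1, a2⟩ ⟨b1, b2⟩ h
      have h' : (a1 : Γ) * a2 = (b1 : Γ) * b2 := congrArg Subtype.val h
      have key : (b1 : Γ)⁻¹ * a1 = b2 * (a2 : Γ)⁻¹ := by
        calc (b1 : Γ)⁻¹ * a1 = (b1 : Γ)⁻¹ * ((a1 : Γ) * a2) * (a2 : Γ)⁻¹ := by group
          _ = (b1 : Γ)⁻¹ * ((b1 : Γ) * b2) * (a2 : Γ)⁻¹ := by rw [h']
          _ = b2 * (a2 : Γ)⁻¹ := by group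
      have mem1 : (b1 : Γ)⁻¹ * a1 ∈ HL := HL.mul_mem (HL.inv_mem b1.2) a1.2
      have mem2 : (b1 : Γ)⁻¹ * a1 ∈ HR := key ▸ HR.mul_mem b2.2 (HR.inv_mem a2.2)
      have e1 : (b1 : Γ)⁻¹ * a1 = 1 := triv _ mem1 mem2
      have e2 : (b2 : Γ) * (a2 : Γ)⁻¹ = 1 := key ▸ e1
      have : (a1 : Γ) = b1 := (inv_mul_eq_one.mp e1).symm
      have h2 : (a2 : Γ) = b2 := (mul_inv_eq_one.mp e2).symm
      exact Prod.ext (Subtype.ext this) (Subtype.ext h2)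
    · rintro ⟨g, x, hx, y, hy, rfl⟩
      exact ⟨(⟨x, hx⟩, ⟨y, hy⟩), rfl⟩
end

section
/- Let B be a bi-gyrotransversal of subgroups H_L and H_R in a group Γ, with bi-transversal operation ⊙ defined by the unique decomposition b₁b₂ = h_ℓ(b₁,b₂)(b₁⊙b₂)h_r(b₁,b₂). Then for every h ∈ H_L H_R, conjugation x ↦ hxh⁻¹ restricts to an automorphism of the groupoid (B, ⊙). Moreover h_ℓ(x,y)^h = h_ℓ(x^h, y^h) and h_r(x,y)^h = h_r(x^h, y^h), where x^h = hxh⁻¹. -/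
/-- In a bi-gyrotransversal decomposition, conjugation by any element of `HL HR`
restricts to an automorphism of the bi-transversal groupoid `(B, ⊙)`, and the
transversal maps are equivariant under this conjugation. -/
theorem biGyrotransversal_conj_automorphism {Γ : Type*} [Group Γ]
    (HL HR : Subgroup Γ) (B : Set Γ)
    (hl hr odot : Γ → Γ → Γ)
    -- B is a bi-transversal of HL and HR in Γ:
    (uniq : ∀ g : Γ, ∃! t : Γ × Γ × Γ,
      t.1 ∈ HL ∧ t.2.1 ∈ B ∧ t.2.2 ∈ HR ∧ g = t.1 * t.2.1 * t.2.2)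
    -- the transversal maps and the bi-transversal operation:
    (hl_mem : ∀ a ∈ B, ∀ b ∈ B, hl a b ∈ HL)
    (hr_mem : ∀ a ∈ B, ∀ b ∈ B, hr a b ∈ HR)
    (odot_mem : ∀ a ∈ B, ∀ b ∈ B, odot a b ∈ B)
    (decomp : ∀ a ∈ B, ∀ b ∈ B, a * b = hl a b * odot a b * hr a b)
    -- HL and HR normalize B:
    (normL : ∀ h ∈ HL, ∀ b ∈ B, h * b * h⁻¹ ∈ B)
    (normR : ∀ h ∈ HR, ∀ b ∈ B, h * b * h⁻¹ ∈ B)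
    -- elements of HL commute with elements of HR:
    (comm : ∀ x ∈ HL, ∀ y ∈ HR, x * y = y * x)
    :
    ∀ h : Γ, (∃ x ∈ HL, ∃ y ∈ HR, h = x * y) →
      Set.BijOn (fun x => h * x * h⁻¹) B B ∧
      ∀ x ∈ B, ∀ y ∈ B,
        h * x * h⁻¹ ∈ B ∧
        odot (h * x * h⁻¹) (h * y * h⁻¹) = h * odot x y * h⁻¹ ∧
        h * hl x y * h⁻¹ = hl (h * x * h⁻¹) (h * y * h⁻¹) ∧
        h * hr x y * h⁻¹ = hr (h * x * h⁻¹) (h * y * h⁻¹) := by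
  -- conjugation by any element of HL·HR maps B into B
  have conjB : ∀ h : Γ, (∃ x ∈ HL, ∃ y ∈ HR, h = x * y) →
      ∀ b ∈ B, h * b * h⁻¹ ∈ B := by
    rintro h ⟨x, hx, y, hy, rfl⟩ b hb
    have h1 : y * b * y⁻¹ ∈ B := normR y hy b hb
    have h2 : x * (y * b * y⁻¹) * x⁻¹ ∈ B := normL x hx _ h1
    have : (x * y) * b * (x * y)⁻¹ = x * (y * b * y⁻¹) * x⁻¹ := by group
    rw [this]; exact h2
  rintro h hh
  obtain ⟨x, hx, y, hy, rfl⟩ := hh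
  set h := x * y with hdef
  have hinv : ∃ x' ∈ HL, ∃ y' ∈ HR, h⁻¹ = x' * y' := by
    refine ⟨x⁻¹, inv_mem hx, y⁻¹, inv_mem hy, ?_⟩
    have := comm x⁻¹ (inv_mem hx) y⁻¹ (inv_mem hy)
    rw [hdef, mul_inv_rev, ← this]
  have hmem : ∃ x' ∈ HL, ∃ y' ∈ HR, h = x' * y' := ⟨x, hx, y, hy, rfl⟩
  have conjL : ∀ l ∈ HL, h * l * h⁻¹ ∈ HL := by
    intro l hlm
    have hc : y * l = l * y := (comm l hlm y hy).symm
    have : h * l * h⁻¹ = x * l * x⁻¹ := by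
      rw [hdef, mul_inv_rev]
      calc x * y * l * (y⁻¹ * x⁻¹) = x * (y * l) * y⁻¹ * x⁻¹ := by group
        _ = x * (l * y) * y⁻¹ * x⁻¹ := by rw [hc]
        _ = x * l * x⁻¹ := by group
    rw [this]; exact mul_mem (mul_mem hx hlm) (inv_mem hx)
  have conjR : ∀ r ∈ HR, h * r * h⁻¹ ∈ HR := by
    intro r hrm
    have hc : x * r = r * x := comm x hx r hrm
    have hc2 : x * (y * r * y⁻¹) = (y * r * y⁻¹) * x :=
      comm x hx _ (mul_mem (mul_mem hy hrm) (inv_mem hy))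
    have : h * r * h⁻¹ = y * r * y⁻¹ := by
      have e1 : h * r * h⁻¹ = x * (y * r * y⁻¹) * x⁻¹ := by rw [hdef]; group
      rw [e1, hc2]; group
    rw [this]; exact mul_mem (mul_mem hy hrm) (inv_mem hy)
  constructor
  · refine ⟨fun b hb => conjB h hmem b hb, ?_, ?_⟩
    · intro a _ b _ hab
      simp only at hab
      exact mul_left_cancel (mul_right_cancel hab)
    · intro b hb
      refine ⟨h⁻¹ * b * h, ?_, ?_⟩
      · have := conjB h⁻¹ hinv b hb
        simpa using this
      · simp only
        group
  · intro a ha b hb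
    have ha' : h * a * h⁻¹ ∈ B := conjB h hmem a ha
    have hb' : h * b * h⁻¹ ∈ B := conjB h hmem b hb
    refine ⟨ha', ?_⟩
    set g := (h * a * h⁻¹) * (h * b * h⁻¹) with hg
    have t1 : (hl (h*a*h⁻¹) (h*b*h⁻¹), odot (h*a*h⁻¹) (h*b*h⁻¹), hr (h*a*h⁻¹) (h*b*h⁻¹)) =
        (h * hl a b * h⁻¹, h * odot a b * h⁻¹, h * hr a b * h⁻¹) := by
      have u := uniq g
      have e1 : (hl (h*a*h⁻¹) (h*b*h⁻¹)) ∈ HL := hl_mem _ ha' _ hb'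
      have e2 : (odot (h*a*h⁻¹) (h*b*h⁻¹)) ∈ B := odot_mem _ ha' _ hb'
      have e3 : (hr (h*a*h⁻¹) (h*b*h⁻¹)) ∈ HR := hr_mem _ ha' _ hb'
      have d1 : g = hl (h*a*h⁻¹) (h*b*h⁻¹) * odot (h*a*h⁻¹) (h*b*h⁻¹) * hr (h*a*h⁻¹) (h*b*h⁻¹) :=
        decomp _ ha' _ hb'
      have f1 : h * hl a b * h⁻¹ ∈ HL := conjL _ (hl_mem a ha b hb)
      have f2 : h * odot a b * h⁻¹ ∈ B := conjB h hmem _ (odot_mem a ha b hb)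
      have f3 : h * hr a b * h⁻¹ ∈ HR := conjR _ (hr_mem a ha b hb)
      have d2 : g = (h * hl a b * h⁻¹) * (h * odot a b * h⁻¹) * (h * hr a b * h⁻¹) := by
        have hd := decomp a ha b hb
        calc g = h * (a * b) * h⁻¹ := by rw [hg]; group
          _ = h * (hl a b * odot a b * hr a b) * h⁻¹ := by rw [hd]
          _ = (h * hl a b * h⁻¹) * (h * odot a b * h⁻¹) * (h * hr a b * h⁻¹) := by group
      exact (u.unique ⟨e1, e2, e3, d1⟩ ⟨f1, f2, f3, d2⟩)
    have tl := congrArg Prod.fst t1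
    have tm := congrArg (fun p => p.2.1) t1
    have tr := congrArg (fun p => p.2.2) t1
    simp only at tl tm tr
    exact ⟨tm, tl.symm, tr.symm⟩
end

section
/- Let B be a bi-gyrotransversal of subgroups H_L and H_R in a group Γ. Then (a⊙b)⊙lgyr[a,b](c) = rgyr[b,c](a)⊙(b⊙c) for all a, b, c ∈ B. -/
/-- The bi-gyroassociative law in a bi-gyrotransversal decomposition:
`(a⊙b) ⊙ lgyr[a,b](c) = rgyr[b,c](a) ⊙ (b⊙c)`, where
`lgyr[a,b](c) = hr(a,b) c hr(a,b)⁻¹` and `rgyr[b,c](a) = hl(b,c)⁻¹ a hl(b,c)`. -/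
theorem biGyrotransversal_bigyroassociative {Γ : Type*} [Group Γ]
    (HL HR : Subgroup Γ) (B : Set Γ)
    (hl hr odot : Γ → Γ → Γ)
    -- B is a bi-transversal of HL and HR in Γ:
    (uniq : ∀ g : Γ, ∃! t : Γ × Γ × Γ,
      t.1 ∈ HL ∧ t.2.1 ∈ B ∧ t.2.2 ∈ HR ∧ g = t.1 * t.2.1 * t.2.2)
    -- the transversal maps and the bi-transversal operation:
    (hl_mem : ∀ a ∈ B, ∀ b ∈ B, hl a b ∈ HL)
    (hr_mem : ∀ a ∈ B, ∀ b ∈ B, hr a b ∈ HR)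
    (odot_mem : ∀ a ∈ B, ∀ b ∈ B, odot a b ∈ B)
    (decomp : ∀ a ∈ B, ∀ b ∈ B, a * b = hl a b * odot a b * hr a b)
    -- HL and HR normalize B:
    (normL : ∀ h ∈ HL, ∀ b ∈ B, h * b * h⁻¹ ∈ B)
    (normR : ∀ h ∈ HR, ∀ b ∈ B, h * b * h⁻¹ ∈ B)
    -- elements of HL commute with elements of HR:
    (comm : ∀ x ∈ HL, ∀ y ∈ HR, x * y = y * x)
    :
    ∀ a ∈ B, ∀ b ∈ B, ∀ c ∈ B,
      odot (odot a b) (hr a b * c * (hr a b)⁻¹) =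
        odot ((hl b c)⁻¹ * a * hl b c) (odot b c) := by
  intro a ha b hb c hc
  set c' := hr a b * c * (hr a b)⁻¹ with hc'def
  have hc' : c' ∈ B := normR _ (hr_mem a ha b hb) c hc
  set x := odot a b with hx
  have hxB : x ∈ B := odot_mem a ha b hb
  set a' := (hl b c)⁻¹ * a * hl b c with ha'def
  have ha' : a' ∈ B := by
    have := normL ((hl b c)⁻¹) (inv_mem (hl_mem b hb c hc)) a ha
    rw [ha'def]; simpa [mul_assoc] using this
  set y := odot b c with hy
  have hyB : y ∈ B := odot_mem b hb c hc
  obtain ⟨t, ht, huniq⟩ := uniq (a * b * c)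
  have e1 : (hl a b * hl x c', odot x c', hr x c' * hr a b) = t := by
    apply huniq
    refine ⟨mul_mem (hl_mem a ha b hb) (hl_mem x hxB c' hc'),
      odot_mem x hxB c' hc', mul_mem (hr_mem x hxB c' hc') (hr_mem a ha b hb), ?_⟩
    have h1 : a * b = hl a b * x * hr a b := decomp a ha b hb
    have h2 : x * c' = hl x c' * odot x c' * hr x c' := decomp x hxB c' hc'
    calc a * b * c = hl a b * x * (hr a b * c * (hr a b)⁻¹) * hr a b := by
          rw [h1]; group
      _ = hl a b * (x * c') * hr a b := by rw [hc'def]; group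
      _ = _ := by rw [h2]; group
  have e2 : (hl b c * hl a' y, odot a' y, hr a' y * hr b c) = t := by
    apply huniq
    refine ⟨mul_mem (hl_mem b hb c hc) (hl_mem a' ha' y hyB),
      odot_mem a' ha' y hyB, mul_mem (hr_mem a' ha' y hyB) (hr_mem b hb c hc), ?_⟩
    have h1 : b * c = hl b c * y * hr b c := decomp b hb c hc
    have h2 : a' * y = hl a' y * odot a' y * hr a' y := decomp a' ha' y hyB
    calc a * b * c = hl b c * (a' * y) * hr b c := by
          rw [mul_assoc, h1, ha'def]; group
      _ = _ := by rw [h2]; group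
  exact congrArg (fun p => p.2.1) (e1.trans e2.symm)
end

section
/- Let B be a bi-gyrotransversal of subgroups H_L and H_R in a group Γ, and suppose B is a twisted subgroup of Γ (1 ∈ B, B closed under inversion, and aba ∈ B for a,b ∈ B). Then lgyr[a,b]⁻¹ = lgyr[b⁻¹,a⁻¹] and rgyr[a,b]⁻¹ = rgyr[b⁻¹,a⁻¹], and (a⊙b)⁻¹ = (lgyr[a,b]∘rgyr[a,b])(b⁻¹⊙a⁻¹), for all a, b ∈ B. -/
/-- If `B` is moreover a twisted subgroup, then the gyrations satisfy
`lgyr[a,b]⁻¹ = lgyr[b⁻¹,a⁻¹]`, `rgyr[a,b]⁻¹ = rgyr[b⁻¹,a⁻¹]` (as maps of `B`), and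
`(a⊙b)⁻¹ = (lgyr[a,b] ∘ rgyr[a,b])(b⁻¹⊙a⁻¹)`. -/
theorem biGyrotransversal_twisted_gyr_inv {Γ : Type*} [Group Γ]
    (HL HR : Subgroup Γ) (B : Set Γ)
    (hl hr odot : Γ → Γ → Γ)
    -- B is a bi-transversal of HL and HR in Γ:
    (uniq : ∀ g : Γ, ∃! t : Γ × Γ × Γ,
      t.1 ∈ HL ∧ t.2.1 ∈ B ∧ t.2.2 ∈ HR ∧ g = t.1 * t.2.1 * t.2.2)
    -- the transversal maps and the bi-transversal operation:
    (hl_mem : ∀ a ∈ B, ∀ b ∈ B, hl a b ∈ HL)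
    (hr_mem : ∀ a ∈ B, ∀ b ∈ B, hr a b ∈ HR)
    (odot_mem : ∀ a ∈ B, ∀ b ∈ B, odot a b ∈ B)
    (decomp : ∀ a ∈ B, ∀ b ∈ B, a * b = hl a b * odot a b * hr a b)
    -- HL and HR normalize B:
    (normL : ∀ h ∈ HL, ∀ b ∈ B, h * b * h⁻¹ ∈ B)
    (normR : ∀ h ∈ HR, ∀ b ∈ B, h * b * h⁻¹ ∈ B)
    -- elements of HL commute with elements of HR:
    (comm : ∀ x ∈ HL, ∀ y ∈ HR, x * y = y * x)
    -- B is a twisted subgroup of Γ: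
    (one_mem : (1 : Γ) ∈ B)
    (inv_mem : ∀ a ∈ B, a⁻¹ ∈ B)
    (tw : ∀ a ∈ B, ∀ b ∈ B, a * b * a ∈ B) :
    ∀ a ∈ B, ∀ b ∈ B,
      (∀ x ∈ B, (hr a b)⁻¹ * x * hr a b = hr b⁻¹ a⁻¹ * x * (hr b⁻¹ a⁻¹)⁻¹) ∧
      (∀ x ∈ B, hl a b * x * (hl a b)⁻¹ = (hl b⁻¹ a⁻¹)⁻¹ * x * hl b⁻¹ a⁻¹) ∧
      (odot a b)⁻¹ =
        hr a b * ((hl a b)⁻¹ * odot b⁻¹ a⁻¹ * hl a b) * (hr a b)⁻¹ := by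
  intro a ha b hb
  have hai := inv_mem a ha
  have hbi := inv_mem b hb
  have hLmem := hl_mem a ha b hb
  have hRmem := hr_mem a ha b hb
  have hx : (odot a b)⁻¹ ∈ B := inv_mem _ (odot_mem a ha b hb)
  have hm1 : (hr a b)⁻¹ * (odot a b)⁻¹ * hr a b ∈ B := by
    have := normR (hr a b)⁻¹ (HR.inv_mem hRmem) _ hx
    simpa using this
  have hm : hl a b * ((hr a b)⁻¹ * (odot a b)⁻¹ * hr a b) * (hl a b)⁻¹ ∈ B :=
    normL _ hLmem _ hm1
  have hc : hr a b * (hl a b)⁻¹ = (hl a b)⁻¹ * hr a b :=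
    (comm _ (HL.inv_mem hLmem) _ hRmem).symm
  obtain ⟨t, _, huniq⟩ := uniq (b⁻¹ * a⁻¹)
  have e1 := huniq (hl b⁻¹ a⁻¹, odot b⁻¹ a⁻¹, hr b⁻¹ a⁻¹)
    ⟨hl_mem _ hbi _ hai, odot_mem _ hbi _ hai, hr_mem _ hbi _ hai, decomp _ hbi _ hai⟩
  have e2 := huniq ((hl a b)⁻¹,
      hl a b * ((hr a b)⁻¹ * (odot a b)⁻¹ * hr a b) * (hl a b)⁻¹, (hr a b)⁻¹)
    ⟨HL.inv_mem hLmem, hm, HR.inv_mem hRmem, ?_⟩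
  · have h := e1.trans e2.symm
    rw [Prod.ext_iff] at h
    obtain ⟨h1, h23⟩ := h
    rw [Prod.ext_iff] at h23
    obtain ⟨h2, h3⟩ := h23
    simp only at h1 h2 h3
    refine ⟨?_, ?_, ?_⟩
    · intro x hxB
      rw [h3]
      group
    · intro x hxB
      rw [h1]
      group
    · rw [h2]
      group
  · have hinv : b⁻¹ * a⁻¹ = (hr a b)⁻¹ * (odot a b)⁻¹ * (hl a b)⁻¹ := by
      rw [← mul_inv_rev, decomp a ha b hb]
      group
    have key : (hl a b)⁻¹ * (hl a b * ((hr a b)⁻¹ * (odot a b)⁻¹ * hr a b) * (hl a b)⁻¹)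
        * (hr a b)⁻¹ = (hr a b)⁻¹ * (odot a b)⁻¹ * (hr a b * (hl a b)⁻¹ * (hr a b)⁻¹) := by
      group
    rw [hinv, key, hc]
    group
end

section
/- Let Γ = H_L B H_R be a bi-gyrodecomposition. Then left and right gyrations are even: lgyr[a⁻¹,b⁻¹] = lgyr[a,b] and rgyr[a⁻¹,b⁻¹] = rgyr[a,b] for all a, b ∈ B. -/
/-- A bi-gyrodecomposition `Γ = HL B HR`: `B` is a bi-gyrotransversal of the subgroups
`HL` and `HR` in the group `Γ`, `B` is a twisted subgroup of `Γ`, and the transversal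
maps `hl`, `hr` (arising from the unique decomposition
`a * b = hl a b * odot a b * hr a b`) satisfy `hl(a,b)⁻¹ = hl(b,a)` and
`hr(a,b)⁻¹ = hr(b,a)`. -/
structure IsBiGyroDecomposition {Γ : Type*} [Group Γ]
    (HL HR : Subgroup Γ) (B : Set Γ) (hl hr odot : Γ → Γ → Γ) : Prop where
  /-- every element of `Γ` factors uniquely as `h_ℓ * b * h_r`. -/
  uniq : ∀ g : Γ, ∃! t : Γ × Γ × Γ,
    t.1 ∈ HL ∧ t.2.1 ∈ B ∧ t.2.2 ∈ HR ∧ g = t.1 * t.2.1 * t.2.2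
  hl_mem : ∀ a ∈ B, ∀ b ∈ B, hl a b ∈ HL
  hr_mem : ∀ a ∈ B, ∀ b ∈ B, hr a b ∈ HR
  odot_mem : ∀ a ∈ B, ∀ b ∈ B, odot a b ∈ B
  decomp : ∀ a ∈ B, ∀ b ∈ B, a * b = hl a b * odot a b * hr a b
  /-- `HL` and `HR` normalize `B`. -/
  normL : ∀ h ∈ HL, ∀ b ∈ B, h * b * h⁻¹ ∈ B
  normR : ∀ h ∈ HR, ∀ b ∈ B, h * b * h⁻¹ ∈ B
  /-- elements of `HL` commute with elements of `HR`. -/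
  comm : ∀ x ∈ HL, ∀ y ∈ HR, x * y = y * x
  /-- `B` is a twisted subgroup of `Γ`. -/
  one_mem : (1 : Γ) ∈ B
  inv_mem : ∀ a ∈ B, a⁻¹ ∈ B
  twisted : ∀ a ∈ B, ∀ b ∈ B, a * b * a ∈ B
  /-- symmetry of the transversal maps. -/
  hl_inv : ∀ a ∈ B, ∀ b ∈ B, (hl a b)⁻¹ = hl b a
  hr_inv : ∀ a ∈ B, ∀ b ∈ B, (hr a b)⁻¹ = hr b a

/-- In a bi-gyrodecomposition, left and right gyrations are even:
`lgyr[a⁻¹,b⁻¹] = lgyr[a,b]` and `rgyr[a⁻¹,b⁻¹] = rgyr[a,b]` as maps of `B`,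
where `lgyr[a,b](x) = hr(a,b) x hr(a,b)⁻¹` and `rgyr[a,b](x) = hl(a,b)⁻¹ x hl(a,b)`. -/
theorem biGyroDecomposition_gyr_even {Γ : Type*} [Group Γ]
    (HL HR : Subgroup Γ) (B : Set Γ) (hl hr odot : Γ → Γ → Γ)
    (h : IsBiGyroDecomposition HL HR B hl hr odot) :
    ∀ a ∈ B, ∀ b ∈ B, ∀ x ∈ B,
      hr a⁻¹ b⁻¹ * x * (hr a⁻¹ b⁻¹)⁻¹ = hr a b * x * (hr a b)⁻¹ ∧
      (hl a⁻¹ b⁻¹)⁻¹ * x * hl a⁻¹ b⁻¹ = (hl a b)⁻¹ * x * hl a b := by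
  have key : ∀ a ∈ B, ∀ b ∈ B, hl a⁻¹ b⁻¹ = hl a b ∧ hr a⁻¹ b⁻¹ = hr a b := by
    intro a ha b hb
    set l := hl b a with hl_def
    set r := hr b a with hr_def
    set c := odot b a with hc_def
    have hlmem : l ∈ HL := h.hl_mem b hb a ha
    have hrmem : r ∈ HR := h.hr_mem b hb a ha
    have hcmem : c ∈ B := h.odot_mem b hb a ha
    have hdec : b * a = l * c * r := h.decomp b hb a ha
    -- the middle element of the alternative decomposition
    have hb1 : l * c⁻¹ * l⁻¹ ∈ B := h.normL l hlmem c⁻¹ (h.inv_mem c hcmem)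
    have hb2 : r⁻¹ * (l * c⁻¹ * l⁻¹) * r ∈ B := by
      have := h.normR r⁻¹ (inv_mem hrmem) (l * c⁻¹ * l⁻¹) hb1
      simpa using this
    have heq : a⁻¹ * b⁻¹ = l⁻¹ * (r⁻¹ * (l * c⁻¹ * l⁻¹) * r) * r⁻¹ := by
      have hcomm : l⁻¹ * r⁻¹ = r⁻¹ * l⁻¹ := h.comm l⁻¹ (inv_mem hlmem) r⁻¹ (inv_mem hrmem)
      have : a⁻¹ * b⁻¹ = (b * a)⁻¹ := by group
      rw [this, hdec]
      rw [show l⁻¹ * (r⁻¹ * (l * c⁻¹ * l⁻¹) * r) * r⁻¹ = (l⁻¹ * r⁻¹) * (l * c⁻¹ * l⁻¹) by group,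
        hcomm]
      group
    obtain ⟨t, _, huniq⟩ := h.uniq (a⁻¹ * b⁻¹)
    have ht1 : (hl a⁻¹ b⁻¹, odot a⁻¹ b⁻¹, hr a⁻¹ b⁻¹) = t := by
      apply huniq
      refine ⟨h.hl_mem _ (h.inv_mem a ha) _ (h.inv_mem b hb),
        h.odot_mem _ (h.inv_mem a ha) _ (h.inv_mem b hb),
        h.hr_mem _ (h.inv_mem a ha) _ (h.inv_mem b hb),
        h.decomp _ (h.inv_mem a ha) _ (h.inv_mem b hb)⟩
    have ht2 : (l⁻¹, r⁻¹ * (l * c⁻¹ * l⁻¹) * r, r⁻¹) = t := by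
      apply huniq
      exact ⟨inv_mem hlmem, hb2, inv_mem hrmem, heq⟩
    have hteq := ht1.trans ht2.symm
    have h1 : hl a⁻¹ b⁻¹ = l⁻¹ := congrArg Prod.fst hteq
    have h2 : hr a⁻¹ b⁻¹ = r⁻¹ := congrArg (fun t => t.2.2) hteq
    exact ⟨h1.trans (h.hl_inv b hb a ha), h2.trans (h.hr_inv b hb a ha)⟩
  intro a ha b hb x hx
  obtain ⟨h1, h2⟩ := key a ha b hb
  rw [h1, h2]
  exact ⟨rfl, rfl⟩
end

section
/- Let Γ = H_L B H_R be a bi-gyrodecomposition. Then rgyr[a,b] = rgyr[lgyr[a,b](a), a⊙b] and lgyr[a,b] = lgyr[lgyr[a,b](a), a⊙b] for all a, b ∈ B; consequently (B, ⊙) is a bi-gyrogroupoid. -/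
namespace IsBiGyroDecomposition

variable {Γ : Type*} [Group Γ] {HL HR : Subgroup Γ} {B : Set Γ} {hl hr odot : Γ → Γ → Γ}

theorem uniq3 (h : IsBiGyroDecomposition HL HR B hl hr odot)
    {p q r p' q' r' : Γ} (hp : p ∈ HL) (hq : q ∈ B) (hr1 : r ∈ HR)
    (hp' : p' ∈ HL) (hq' : q' ∈ B) (hr1' : r' ∈ HR)
    (e : p * q * r = p' * q' * r') : p = p' ∧ q = q' ∧ r = r' := by
  obtain ⟨t, -, hu⟩ := h.uniq (p * q * r)
  have e1 : ((p, q, r) : Γ × Γ × Γ) = t := hu (p, q, r) ⟨hp, hq, hr1, rfl⟩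
  have e2 : ((p', q', r') : Γ × Γ × Γ) = t := hu (p', q', r') ⟨hp', hq', hr1', e⟩
  have e3 := e1.trans e2.symm
  simpa [Prod.ext_iff] using e3

theorem dec_eq (h : IsBiGyroDecomposition HL HR B hl hr odot)
    {a b p q r : Γ} (ha : a ∈ B) (hb : b ∈ B)
    (hp : p ∈ HL) (hq : q ∈ B) (hr1 : r ∈ HR) (e : a * b = p * q * r) :
    hl a b = p ∧ odot a b = q ∧ hr a b = r :=
  h.uniq3 (h.hl_mem a ha b hb) (h.odot_mem a ha b hb) (h.hr_mem a ha b hb)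
    hp hq hr1 ((h.decomp a ha b hb).symm.trans e)

theorem one_left (h : IsBiGyroDecomposition HL HR B hl hr odot)
    {b : Γ} (hb : b ∈ B) : hl 1 b = 1 ∧ odot 1 b = b ∧ hr 1 b = 1 :=
  h.dec_eq h.one_mem hb (Subgroup.one_mem _) hb (Subgroup.one_mem _) (by group)

theorem one_right (h : IsBiGyroDecomposition HL HR B hl hr odot)
    {a : Γ} (ha : a ∈ B) : hl a 1 = 1 ∧ odot a 1 = a ∧ hr a 1 = 1 :=
  h.dec_eq ha h.one_mem (Subgroup.one_mem _) ha (Subgroup.one_mem _) (by group)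

theorem inv_left (h : IsBiGyroDecomposition HL HR B hl hr odot)
    {a : Γ} (ha : a ∈ B) : hl a⁻¹ a = 1 ∧ odot a⁻¹ a = 1 ∧ hr a⁻¹ a = 1 :=
  h.dec_eq (h.inv_mem a ha) ha (Subgroup.one_mem _) h.one_mem (Subgroup.one_mem _) (by group)

/-- equivariance of the decomposition under conjugation by `HR`. -/
theorem conjR (h : IsBiGyroDecomposition HL HR B hl hr odot)
    {g x y : Γ} (hg : g ∈ HR) (hx : x ∈ B) (hy : y ∈ B) :
    hl (g * x * g⁻¹) (g * y * g⁻¹) = hl x y ∧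
    odot (g * x * g⁻¹) (g * y * g⁻¹) = g * odot x y * g⁻¹ ∧
    hr (g * x * g⁻¹) (g * y * g⁻¹) = g * hr x y * g⁻¹ := by
  have hc : hl x y * g = g * hl x y := h.comm _ (h.hl_mem x hx y hy) g hg
  refine h.dec_eq (h.normR g hg x hx) (h.normR g hg y hy) (h.hl_mem x hx y hy)
    (h.normR g hg _ (h.odot_mem x hx y hy))
    (mul_mem (mul_mem hg (h.hr_mem x hx y hy)) (Subgroup.inv_mem _ hg)) ?_
  calc (g * x * g⁻¹) * (g * y * g⁻¹) = g * (x * y) * g⁻¹ := by group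
    _ = g * (hl x y * odot x y * hr x y) * g⁻¹ := by rw [h.decomp x hx y hy]
    _ = (g * hl x y) * (odot x y * hr x y) * g⁻¹ := by group
    _ = (hl x y * g) * (odot x y * hr x y) * g⁻¹ := by rw [hc]
    _ = hl x y * (g * odot x y * g⁻¹) * (g * hr x y * g⁻¹) := by group

/-- equivariance of the decomposition under conjugation by `HL` (inverse form). -/
theorem conjL (h : IsBiGyroDecomposition HL HR B hl hr odot)
    {g x y : Γ} (hg : g ∈ HL) (hx : x ∈ B) (hy : y ∈ B) :
    hl (g⁻¹ * x * g) (g⁻¹ * y * g) = g⁻¹ * hl x y * g ∧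
    odot (g⁻¹ * x * g) (g⁻¹ * y * g) = g⁻¹ * odot x y * g ∧
    hr (g⁻¹ * x * g) (g⁻¹ * y * g) = hr x y := by
  have hc : g⁻¹ * hr x y = hr x y * g⁻¹ := h.comm g⁻¹ (Subgroup.inv_mem _ hg) _ (h.hr_mem x hx y hy)
  have hxm : g⁻¹ * x * g ∈ B := by simpa using h.normL g⁻¹ (Subgroup.inv_mem _ hg) x hx
  have hym : g⁻¹ * y * g ∈ B := by simpa using h.normL g⁻¹ (Subgroup.inv_mem _ hg) y hy
  have hom : g⁻¹ * odot x y * g ∈ B := by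
    simpa using h.normL g⁻¹ (Subgroup.inv_mem _ hg) _ (h.odot_mem x hx y hy)
  refine h.dec_eq hxm hym
    (mul_mem (mul_mem (Subgroup.inv_mem _ hg) (h.hl_mem x hx y hy)) hg) hom
    (h.hr_mem x hx y hy) ?_
  calc (g⁻¹ * x * g) * (g⁻¹ * y * g) = g⁻¹ * (x * y) * g := by group
    _ = g⁻¹ * (hl x y * odot x y * hr x y) * g := by rw [h.decomp x hx y hy]
    _ = (g⁻¹ * hl x y * g) * (g⁻¹ * odot x y * g) * (g⁻¹ * hr x y * g) := by group
    _ = (g⁻¹ * hl x y * g) * (g⁻¹ * odot x y * g) * (hr x y * g⁻¹ * g) := by rw [hc]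
    _ = (g⁻¹ * hl x y * g) * (g⁻¹ * odot x y * g) * hr x y := by group

/-- the key reduction identities, which hold exactly:
`hl(lgyr[a,b]a, a⊙b) = hl(a,b)` and `hr(lgyr[a,b]a, a⊙b) = hr(a,b)`. -/
theorem red (h : IsBiGyroDecomposition HL HR B hl hr odot)
    {a b : Γ} (ha : a ∈ B) (hb : b ∈ B) :
    hl (hr a b * a * (hr a b)⁻¹) (odot a b) = hl a b ∧
    hr (hr a b * a * (hr a b)⁻¹) (odot a b) = hr a b := by
  have ha' : hr a b * a * (hr a b)⁻¹ ∈ B := h.normR _ (h.hr_mem a ha b hb) a ha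
  have hm : odot a b ∈ B := h.odot_mem a ha b hb
  have e : odot a b * (hr a b * a * (hr a b)⁻¹) = (hl a b)⁻¹ * (a * b * a) * (hr a b)⁻¹ := by
    have hmv : odot a b = (hl a b)⁻¹ * (a * b) * (hr a b)⁻¹ := by
      rw [h.decomp a ha b hb]; group
    rw [hmv]; group
  obtain ⟨e1, -, e3⟩ := h.dec_eq hm ha' (Subgroup.inv_mem _ (h.hl_mem a ha b hb))
    (h.twisted a ha b hb) (Subgroup.inv_mem _ (h.hr_mem a ha b hb)) e
  constructor
  · rw [← h.hl_inv _ hm _ ha', e1, inv_inv]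
  · rw [← h.hr_inv _ hm _ ha', e3, inv_inv]

/-- the bi-gyroassociative law at the level of `Γ`. -/
theorem assoc (h : IsBiGyroDecomposition HL HR B hl hr odot)
    {a b c : Γ} (ha : a ∈ B) (hb : b ∈ B) (hc : c ∈ B) :
    odot (odot a b) (hr a b * c * (hr a b)⁻¹) =
      odot ((hl b c)⁻¹ * a * hl b c) (odot b c) := by
  have hc' : hr a b * c * (hr a b)⁻¹ ∈ B := h.normR _ (h.hr_mem a ha b hb) c hc
  have ha'' : (hl b c)⁻¹ * a * hl b c ∈ B := by
    simpa using h.normL _ (Subgroup.inv_mem _ (h.hl_mem b hb c hc)) a ha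
  have hm : odot a b ∈ B := h.odot_mem a ha b hb
  have hm2 : odot b c ∈ B := h.odot_mem b hb c hc
  have e1 : a * b * c =
      (hl a b * hl (odot a b) (hr a b * c * (hr a b)⁻¹)) *
        odot (odot a b) (hr a b * c * (hr a b)⁻¹) *
        (hr (odot a b) (hr a b * c * (hr a b)⁻¹) * hr a b) := by
    calc a * b * c = (hl a b * odot a b * hr a b) * c := by rw [h.decomp a ha b hb]
      _ = hl a b * (odot a b * (hr a b * c * (hr a b)⁻¹)) * hr a b := by group
      _ = hl a b * (hl (odot a b) (hr a b * c * (hr a b)⁻¹) *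
            odot (odot a b) (hr a b * c * (hr a b)⁻¹) *
            hr (odot a b) (hr a b * c * (hr a b)⁻¹)) * hr a b := by
          rw [h.decomp _ hm _ hc']
      _ = _ := by group
  have e2 : a * b * c =
      (hl b c * hl ((hl b c)⁻¹ * a * hl b c) (odot b c)) *
        odot ((hl b c)⁻¹ * a * hl b c) (odot b c) *
        (hr ((hl b c)⁻¹ * a * hl b c) (odot b c) * hr b c) := by
    calc a * b * c = a * (b * c) := by group
      _ = a * (hl b c * odot b c * hr b c) := by rw [h.decomp b hb c hc]
      _ = hl b c * (((hl b c)⁻¹ * a * hl b c) * odot b c) * hr b c := by group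
      _ = hl b c * (hl ((hl b c)⁻¹ * a * hl b c) (odot b c) *
            odot ((hl b c)⁻¹ * a * hl b c) (odot b c) *
            hr ((hl b c)⁻¹ * a * hl b c) (odot b c)) * hr b c := by
          rw [h.decomp _ ha'' _ hm2]
      _ = _ := by group
  exact (h.uniq3
    (mul_mem (h.hl_mem a ha b hb) (h.hl_mem _ hm _ hc'))
    (h.odot_mem _ hm _ hc')
    (mul_mem (h.hr_mem _ hm _ hc') (h.hr_mem a ha b hb))
    (mul_mem (h.hl_mem b hb c hc) (h.hl_mem _ ha'' _ hm2))
    (h.odot_mem _ ha'' _ hm2)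
    (mul_mem (h.hr_mem _ ha'' _ hm2) (h.hr_mem b hb c hc))
    (e1.symm.trans e2)).2.1

end IsBiGyroDecomposition

/-- In a bi-gyrodecomposition, the gyrations satisfy the reduction properties
`rgyr[a,b] = rgyr[lgyr[a,b](a), a⊙b]` and `lgyr[a,b] = lgyr[lgyr[a,b](a), a⊙b]`
(as maps of `B`); consequently, `(B, ⊙)` with the induced gyrations is a
bi-gyrogroupoid. -/

theorem biGyroDecomposition_reduction_and_biGyrogroupoid {Γ : Type*} [Group Γ]
    (HL HR : Subgroup Γ) (B : Set Γ) (hl hr odot : Γ → Γ → Γ)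
    (h : IsBiGyroDecomposition HL HR B hl hr odot) :
    (∀ a ∈ B, ∀ b ∈ B, ∀ x ∈ B,
      (hl a b)⁻¹ * x * hl a b =
        (hl (hr a b * a * (hr a b)⁻¹) (odot a b))⁻¹ * x *
          hl (hr a b * a * (hr a b)⁻¹) (odot a b) ∧
      hr a b * x * (hr a b)⁻¹ =
        hr (hr a b * a * (hr a b)⁻¹) (odot a b) * x *
          (hr (hr a b * a * (hr a b)⁻¹) (odot a b))⁻¹) ∧
    IsBiGyrogroupoid
      (fun a b : ↥B => (⟨odot a b, h.odot_mem _ a.2 _ b.2⟩ : ↥B))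
      (⟨1, h.one_mem⟩ : ↥B)
      (fun a b c : ↥B =>
        (⟨hr a b * c * (hr a b)⁻¹, h.normR _ (h.hr_mem _ a.2 _ b.2) _ c.2⟩ : ↥B))
      (fun a b c : ↥B =>
        (⟨(hl a b)⁻¹ * c * hl a b,
          by simpa using h.normL _ (HL.inv_mem (h.hl_mem _ a.2 _ b.2)) _ c.2⟩ : ↥B)) := by
  refine ⟨fun a ha b hb x hx => ?_, ?_⟩
  · obtain ⟨e1, e2⟩ := h.red ha hb
    rw [e1, e2]
    exact ⟨rfl, rfl⟩
  · refine
      { zero_add := fun a => Subtype.ext (h.one_left a.2).2.1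
        add_zero := fun a => Subtype.ext (h.one_right a.2).2.1
        exists_left_inv := fun a =>
          ⟨⟨(a : Γ)⁻¹, h.inv_mem _ a.2⟩, Subtype.ext (h.inv_left a.2).2.1⟩
        lgyr_bijective := fun a b => Function.bijective_iff_has_inverse.mpr
          ⟨fun c => ⟨(hr a b)⁻¹ * c * hr a b, by
              simpa using h.normR _ (Subgroup.inv_mem _ (h.hr_mem _ a.2 _ b.2)) _ c.2⟩,
            fun c => Subtype.ext (by group), fun c => Subtype.ext (by group)⟩
        rgyr_bijective := fun a b => Function.bijective_iff_has_inverse.mpr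
          ⟨fun c => ⟨hl a b * c * (hl a b)⁻¹, h.normL _ (h.hl_mem _ a.2 _ b.2) _ c.2⟩,
            fun c => Subtype.ext (by group), fun c => Subtype.ext (by group)⟩
        lgyr_add := fun a b x y =>
          Subtype.ext ((h.conjR (h.hr_mem _ a.2 _ b.2) x.2 y.2).2.1.symm)
        rgyr_add := fun a b x y =>
          Subtype.ext ((h.conjL (h.hl_mem _ a.2 _ b.2) x.2 y.2).2.1.symm)
        bgassoc := fun a b c => Subtype.ext (h.assoc a.2 b.2 c.2)
        rgyr_red := fun a b => funext fun c => Subtype.ext (by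
          show (hl (a : Γ) b)⁻¹ * c * hl (a : Γ) b =
            (hl (hr (a : Γ) b * a * (hr (a : Γ) b)⁻¹) (odot (a : Γ) b))⁻¹ * c *
              hl (hr (a : Γ) b * a * (hr (a : Γ) b)⁻¹) (odot (a : Γ) b)
          rw [(h.red a.2 b.2).1])
        lgyr_red := fun a b => funext fun c => Subtype.ext (by
          show hr (a : Γ) b * c * (hr (a : Γ) b)⁻¹ =
            hr (hr (a : Γ) b * a * (hr (a : Γ) b)⁻¹) (odot (a : Γ) b) * c *
              (hr (hr (a : Γ) b * a * (hr (a : Γ) b)⁻¹) (odot (a : Γ) b))⁻¹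
          rw [(h.red a.2 b.2).2])
        lgyr_zero := fun a => funext fun c => Subtype.ext (by
          show hr (a : Γ) 1 * c * (hr (a : Γ) 1)⁻¹ = (c : Γ)
          rw [(h.one_right a.2).2.2]; group)
        rgyr_zero := fun a => funext fun c => Subtype.ext (by
          show (hl (a : Γ) 1)⁻¹ * c * hl (a : Γ) 1 = (c : Γ)
          rw [(h.one_right a.2).1]; group) }
end

section
/- Let Γ = H_L B H_R be a bi-gyrodecomposition and define the bi-gyrogroup operation a⊕b = rgyr[b,a](a ⊙ b) on B, where ⊙ is the bi-transversal operation. Then (B, ⊕) is a gyrogroup with gyrations gyr[a,b] = lgyr[a,b] ∘ rgyr[b,a]: it has a two-sided identity 0, two-sided inverses, satisfies the left gyroassociative law a⊕(b⊕c) = (a⊕b)⊕gyr[a,b](c) with each gyr[a,b] an automorphism of (B,⊕), and the left reduction property gyr[a,b] = gyr[a⊕b, b]. -/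
/-- A gyrogroup: a two-sided identity, two-sided inverses, the gyroassociative law
with each `gyr a b` an automorphism of `(G, add)`, and the left reduction property. -/
structure IsGyrogroup {G : Type*} (add : G → G → G) (zero : G)
    (gyr : G → G → G → G) : Prop where
  zero_add : ∀ a, add zero a = a
  add_zero : ∀ a, add a zero = a
  exists_inv : ∀ a, ∃ b, add b a = zero ∧ add a b = zero
  gyr_bijective : ∀ a b, Function.Bijective (gyr a b)
  gyr_add : ∀ a b x y, gyr a b (add x y) = add (gyr a b x) (gyr a b y)
  gyroassoc : ∀ a b c, add a (add b c) = add (add a b) (gyr a b c)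
  reduction : ∀ a b, gyr a b = gyr (add a b) b

section Aux
variable {Γ : Type*} [Group Γ] {HL HR : Subgroup Γ} {B : Set Γ} {hl hr odot : Γ → Γ → Γ}

private lemma bgd_rearr {x l r l2 r2 : Γ} (hc : l2 * r = r * l2) :
    (x * l * r) * (l2 * r2) = x * (l * l2) * (r * r2) := by
  calc (x * l * r) * (l2 * r2) = x * l * (r * l2) * r2 := by group
    _ = x * l * (l2 * r) * r2 := by rw [hc]
    _ = x * (l * l2) * (r * r2) := by group

lemma bgd_key (h : IsBiGyroDecomposition HL HR B hl hr odot)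
    {b1 l1 r1 b2 l2 r2 : Γ} (hb1 : b1 ∈ B) (hl1 : l1 ∈ HL) (hr1 : r1 ∈ HR)
    (hb2 : b2 ∈ B) (hl2 : l2 ∈ HL) (hr2 : r2 ∈ HR)
    (heq : b1 * l1 * r1 = b2 * l2 * r2) : b1 = b2 ∧ l1 = l2 ∧ r1 = r2 := by
  obtain ⟨t, -, ht⟩ := h.uniq (b1 * l1 * r1)
  have e1 := ht (l1, l1⁻¹ * b1 * l1, r1)
    ⟨hl1, by simpa using h.normL _ (HL.inv_mem hl1) _ hb1, hr1, by group⟩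
  have e2 := ht (l2, l2⁻¹ * b2 * l2, r2)
    ⟨hl2, by simpa using h.normL _ (HL.inv_mem hl2) _ hb2, hr2, by rw [heq]; group⟩
  rw [← e2] at e1
  simp only [Prod.mk.injEq] at e1
  obtain ⟨el, eb, er⟩ := e1
  subst el
  subst er
  refine ⟨?_, rfl, rfl⟩
  have eb' : l1⁻¹ * b1 = l1⁻¹ * b2 := mul_right_cancel eb
  exact mul_left_cancel eb'

lemma bgd_mul (h : IsBiGyroDecomposition HL HR B hl hr odot) {a b : Γ}
    (ha : a ∈ B) (hb : b ∈ B) :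
    a * b = ((hl b a)⁻¹ * odot a b * hl b a) * hl a b * hr a b := by
  rw [← h.hl_inv a ha b hb, h.decomp a ha b hb]
  group

lemma bgd_A_mem (h : IsBiGyroDecomposition HL HR B hl hr odot) {a b : Γ}
    (ha : a ∈ B) (hb : b ∈ B) : (hl b a)⁻¹ * odot a b * hl b a ∈ B := by
  simpa using h.normL _ (HL.inv_mem (h.hl_mem _ hb _ ha)) _ (h.odot_mem _ ha _ hb)

lemma bgd_gyrval (h : IsBiGyroDecomposition HL HR B hl hr odot) {a b : Γ}
    (ha : a ∈ B) (hb : b ∈ B) (x : Γ) :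
    hr a b * ((hl b a)⁻¹ * x * hl b a) * (hr a b)⁻¹
      = hl a b * hr a b * x * (hl a b * hr a b)⁻¹ := by
  rw [← h.hl_inv a ha b hb]
  rw [h.comm _ (h.hl_mem a ha b hb) _ (h.hr_mem a ha b hb)]
  group

lemma bgd_conj_mem (h : IsBiGyroDecomposition HL HR B hl hr odot) {a b y : Γ}
    (ha : a ∈ B) (hb : b ∈ B) (hy : y ∈ B) :
    hl a b * hr a b * y * (hl a b * hr a b)⁻¹ ∈ B := by
  have h1 : hr a b * y * (hr a b)⁻¹ ∈ B := h.normR _ (h.hr_mem a ha b hb) _ hy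
  have h2 := h.normL _ (h.hl_mem a ha b hb) _ h1
  have e : hl a b * hr a b * y * (hl a b * hr a b)⁻¹
      = hl a b * (hr a b * y * (hr a b)⁻¹) * (hl a b)⁻¹ := by group
  rw [e]; exact h2

lemma bgd_invconj_mem (h : IsBiGyroDecomposition HL HR B hl hr odot) {a b y : Γ}
    (ha : a ∈ B) (hb : b ∈ B) (hy : y ∈ B) :
    (hl a b * hr a b)⁻¹ * y * (hl a b * hr a b) ∈ B := by
  have h1 : (hl a b)⁻¹ * y * hl a b ∈ B := by
    simpa using h.normL _ (HL.inv_mem (h.hl_mem a ha b hb)) _ hy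
  have h2 := h.normR _ (HR.inv_mem (h.hr_mem a ha b hb)) _ h1
  have e : (hl a b * hr a b)⁻¹ * y * (hl a b * hr a b)
      = (hr a b)⁻¹ * ((hl a b)⁻¹ * y * hl a b) * ((hr a b)⁻¹)⁻¹ := by group
  rw [e]; exact h2

end Aux

/-- Given a bi-gyrodecomposition `Γ = HL B HR`, the set `B` equipped with the
bi-gyrogroup operation `a ⊕ b = rgyr[b,a](a ⊙ b)` and gyrations
`gyr[a,b] = lgyr[a,b] ∘ rgyr[b,a]` is a gyrogroup. -/
theorem biGyroDecomposition_gyrogroup {Γ : Type*} [Group Γ]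
    (HL HR : Subgroup Γ) (B : Set Γ) (hl hr odot : Γ → Γ → Γ)
    (h : IsBiGyroDecomposition HL HR B hl hr odot) :
    IsGyrogroup
      (fun a b : ↥B =>
        (⟨(hl b a)⁻¹ * odot a b * hl b a,
          by simpa using
            h.normL _ (HL.inv_mem (h.hl_mem _ b.2 _ a.2)) _ (h.odot_mem _ a.2 _ b.2)⟩ : ↥B))
      (⟨1, h.one_mem⟩ : ↥B)
      (fun a b x : ↥B =>
        (⟨hr a b * ((hl b a)⁻¹ * x * hl b a) * (hr a b)⁻¹,
          h.normR _ (h.hr_mem _ a.2 _ b.2) _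
            (by simpa using h.normL _ (HL.inv_mem (h.hl_mem _ b.2 _ a.2)) _ x.2)⟩ : ↥B)) := by
  constructor
  case zero_add =>
    intro a
    apply Subtype.ext
    show (hl (a : Γ) 1)⁻¹ * odot 1 (a : Γ) * hl (a : Γ) 1 = (a : Γ)
    exact (bgd_key h (bgd_A_mem h h.one_mem a.2) (h.hl_mem _ h.one_mem _ a.2)
      (h.hr_mem _ h.one_mem _ a.2) a.2 HL.one_mem HR.one_mem
      ((bgd_mul h h.one_mem a.2).symm.trans (by group))).1
  case add_zero =>
    intro a
    apply Subtype.ext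
    show (hl 1 (a : Γ))⁻¹ * odot (a : Γ) 1 * hl 1 (a : Γ) = (a : Γ)
    exact (bgd_key h (bgd_A_mem h a.2 h.one_mem) (h.hl_mem _ a.2 _ h.one_mem)
      (h.hr_mem _ a.2 _ h.one_mem) a.2 HL.one_mem HR.one_mem
      ((bgd_mul h a.2 h.one_mem).symm.trans (by group))).1
  case exists_inv =>
    intro a
    have hai : (a : Γ)⁻¹ ∈ B := h.inv_mem _ a.2
    refine ⟨⟨(a : Γ)⁻¹, hai⟩, Subtype.ext ?_, Subtype.ext ?_⟩
    · show (hl (a : Γ) (a : Γ)⁻¹)⁻¹ * odot (a : Γ)⁻¹ (a : Γ) * hl (a : Γ) (a : Γ)⁻¹ = 1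
      exact (bgd_key h (bgd_A_mem h hai a.2) (h.hl_mem _ hai _ a.2)
        (h.hr_mem _ hai _ a.2) h.one_mem HL.one_mem HR.one_mem
        ((bgd_mul h hai a.2).symm.trans (by group))).1
    · show (hl (a : Γ)⁻¹ (a : Γ))⁻¹ * odot (a : Γ) (a : Γ)⁻¹ * hl (a : Γ)⁻¹ (a : Γ) = 1
      exact (bgd_key h (bgd_A_mem h a.2 hai) (h.hl_mem _ a.2 _ hai)
        (h.hr_mem _ a.2 _ hai) h.one_mem HL.one_mem HR.one_mem
        ((bgd_mul h a.2 hai).symm.trans (by group))).1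
  case gyr_bijective =>
    intro a b
    constructor
    · intro x y hxy
      apply Subtype.ext
      have hv := congrArg Subtype.val hxy
      simp only [] at hv
      rw [bgd_gyrval h a.2 b.2 (x : Γ), bgd_gyrval h a.2 b.2 (y : Γ)] at hv
      exact mul_left_cancel (mul_right_cancel hv)
    · intro y
      refine ⟨⟨(hl (a : Γ) (b : Γ) * hr (a : Γ) (b : Γ))⁻¹ * (y : Γ) *
          (hl (a : Γ) (b : Γ) * hr (a : Γ) (b : Γ)), bgd_invconj_mem h a.2 b.2 y.2⟩,
        Subtype.ext ?_⟩
      show hr (a : Γ) (b : Γ) * ((hl (b : Γ) (a : Γ))⁻¹ * _ * hl (b : Γ) (a : Γ)) *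
        (hr (a : Γ) (b : Γ))⁻¹ = (y : Γ)
      rw [bgd_gyrval h a.2 b.2]
      group
  case gyr_add =>
    intro a b x y
    apply Subtype.ext
    have mA := bgd_A_mem h x.2 y.2
    show hr (a : Γ) (b : Γ) * ((hl (b : Γ) (a : Γ))⁻¹ *
        ((hl (y : Γ) (x : Γ))⁻¹ * odot (x : Γ) (y : Γ) * hl (y : Γ) (x : Γ)) *
        hl (b : Γ) (a : Γ)) * (hr (a : Γ) (b : Γ))⁻¹
      = (hl (hr (a : Γ) (b : Γ) * ((hl (b : Γ) (a : Γ))⁻¹ * (y : Γ) * hl (b : Γ) (a : Γ)) *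
              (hr (a : Γ) (b : Γ))⁻¹)
            (hr (a : Γ) (b : Γ) * ((hl (b : Γ) (a : Γ))⁻¹ * (x : Γ) * hl (b : Γ) (a : Γ)) *
              (hr (a : Γ) (b : Γ))⁻¹))⁻¹ *
        odot (hr (a : Γ) (b : Γ) * ((hl (b : Γ) (a : Γ))⁻¹ * (x : Γ) * hl (b : Γ) (a : Γ)) *
              (hr (a : Γ) (b : Γ))⁻¹)
            (hr (a : Γ) (b : Γ) * ((hl (b : Γ) (a : Γ))⁻¹ * (y : Γ) * hl (b : Γ) (a : Γ)) *
              (hr (a : Γ) (b : Γ))⁻¹) *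
        hl (hr (a : Γ) (b : Γ) * ((hl (b : Γ) (a : Γ))⁻¹ * (y : Γ) * hl (b : Γ) (a : Γ)) *
              (hr (a : Γ) (b : Γ))⁻¹)
            (hr (a : Γ) (b : Γ) * ((hl (b : Γ) (a : Γ))⁻¹ * (x : Γ) * hl (b : Γ) (a : Γ)) *
              (hr (a : Γ) (b : Γ))⁻¹)
    simp only [bgd_gyrval h a.2 b.2]
    set α := (a : Γ) with hα; set β := (b : Γ) with hβ
    set χ := (x : Γ) with hχ; set ψ := (y : Γ) with hψ
    set k := hl α β * hr α β with hk
    set χ' := k * χ * k⁻¹ with hχ'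
    set ψ' := k * ψ * k⁻¹ with hψ'
    have mχ' : χ' ∈ B := bgd_conj_mem h a.2 b.2 x.2
    have mψ' : ψ' ∈ B := bgd_conj_mem h a.2 b.2 y.2
    have hcl : hl χ ψ * hr α β = hr α β * hl χ ψ :=
      h.comm _ (h.hl_mem _ x.2 _ y.2) _ (h.hr_mem _ a.2 _ b.2)
    have hmL : k * hl χ ψ * k⁻¹ = hl α β * hl χ ψ * (hl α β)⁻¹ := by
      rw [show k * hl χ ψ * k⁻¹
          = hl α β * (hr α β * hl χ ψ * (hr α β)⁻¹) * (hl α β)⁻¹ from by rw [hk]; group,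
        ← hcl]
      group
    have hXR : hr α β * hr χ ψ * (hr α β)⁻¹ ∈ HR :=
      mul_mem (mul_mem (h.hr_mem _ a.2 _ b.2) (h.hr_mem _ x.2 _ y.2))
        (HR.inv_mem (h.hr_mem _ a.2 _ b.2))
    have hcr : hl α β * (hr α β * hr χ ψ * (hr α β)⁻¹)
        = (hr α β * hr χ ψ * (hr α β)⁻¹) * hl α β :=
      h.comm _ (h.hl_mem _ a.2 _ b.2) _ hXR
    have hmR : k * hr χ ψ * k⁻¹ = hr α β * hr χ ψ * (hr α β)⁻¹ := by
      rw [show k * hr χ ψ * k⁻¹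
          = hl α β * (hr α β * hr χ ψ * (hr α β)⁻¹) * (hl α β)⁻¹ from by rw [hk]; group,
        hcr]
      group
    have memL : k * hl χ ψ * k⁻¹ ∈ HL := by
      rw [hmL]
      exact mul_mem (mul_mem (h.hl_mem _ a.2 _ b.2) (h.hl_mem _ x.2 _ y.2))
        (HL.inv_mem (h.hl_mem _ a.2 _ b.2))
    have memR : k * hr χ ψ * k⁻¹ ∈ HR := by rw [hmR]; exact hXR
    have e2 : (k * ((hl ψ χ)⁻¹ * odot χ ψ * hl ψ χ) * k⁻¹) * (k * hl χ ψ * k⁻¹) *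
        (k * hr χ ψ * k⁻¹) = χ' * ψ' := by
      rw [show χ' * ψ' = k * (χ * ψ) * k⁻¹ from by rw [hχ', hψ']; group,
        bgd_mul (a := χ) (b := ψ) h x.2 y.2]
      group
    have e1 : ((hl ψ' χ')⁻¹ * odot χ' ψ' * hl ψ' χ') * hl χ' ψ' * hr χ' ψ' = χ' * ψ' :=
      (bgd_mul h mχ' mψ').symm
    exact (bgd_key h (bgd_conj_mem h a.2 b.2 mA) memL memR
      (bgd_A_mem h mχ' mψ') (h.hl_mem _ mχ' _ mψ') (h.hr_mem _ mχ' _ mψ')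
      (e2.trans e1.symm)).1
  case gyroassoc =>
    intro a b c
    apply Subtype.ext
    set α := (a : Γ); set β := (b : Γ); set γ := (c : Γ)
    set u := (hl γ β)⁻¹ * odot β γ * hl γ β with hu
    set s := (hl β α)⁻¹ * odot α β * hl β α with hs
    show (hl u α)⁻¹ * odot α u * hl u α
      = (hl (hr α β * ((hl β α)⁻¹ * γ * hl β α) * (hr α β)⁻¹) s)⁻¹ *
        odot s (hr α β * ((hl β α)⁻¹ * γ * hl β α) * (hr α β)⁻¹) *
        hl (hr α β * ((hl β α)⁻¹ * γ * hl β α) * (hr α β)⁻¹) s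
    rw [bgd_gyrval h a.2 b.2]
    set k := hl α β * hr α β with hk
    set γ' := k * γ * k⁻¹ with hγ'
    have mu : u ∈ B := bgd_A_mem h b.2 c.2
    have ms : s ∈ B := bgd_A_mem h a.2 b.2
    have mγ' : γ' ∈ B := bgd_conj_mem h a.2 b.2 c.2
    have hc1 : hl β γ * hr α u = hr α u * hl β γ :=
      h.comm _ (h.hl_mem _ b.2 _ c.2) _ (h.hr_mem _ a.2 _ mu)
    have hc2 : hl α β * hr s γ' = hr s γ' * hl α β :=
      h.comm _ (h.hl_mem _ a.2 _ b.2) _ (h.hr_mem _ ms _ mγ')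
    have e1 : α * (β * γ)
        = ((hl u α)⁻¹ * odot α u * hl u α) * (hl α u * hl β γ) * (hr α u * hr β γ) := by
      calc α * (β * γ) = (α * u) * (hl β γ * hr β γ) := by
            rw [bgd_mul (a := β) (b := γ) h b.2 c.2, hu]; group
        _ = (((hl u α)⁻¹ * odot α u * hl u α) * hl α u * hr α u) * (hl β γ * hr β γ) := by
            rw [← bgd_mul h a.2 mu]
        _ = _ := bgd_rearr hc1
    have e2 : α * (β * γ)
        = ((hl γ' s)⁻¹ * odot s γ' * hl γ' s) * (hl s γ' * hl α β) * (hr s γ' * hr α β) := by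
      calc α * (β * γ) = (s * γ') * (hl α β * hr α β) := by
            rw [show α * (β * γ) = (α * β) * γ from by group, bgd_mul (a := α) (b := β) h a.2 b.2, hγ', hk,
              hs]
            group
        _ = (((hl γ' s)⁻¹ * odot s γ' * hl γ' s) * hl s γ' * hr s γ') *
            (hl α β * hr α β) := by rw [← bgd_mul h ms mγ']
        _ = _ := bgd_rearr hc2
    exact (bgd_key h (bgd_A_mem h a.2 mu)
      (mul_mem (h.hl_mem _ a.2 _ mu) (h.hl_mem _ b.2 _ c.2))
      (mul_mem (h.hr_mem _ a.2 _ mu) (h.hr_mem _ b.2 _ c.2))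
      (bgd_A_mem h ms mγ')
      (mul_mem (h.hl_mem _ ms _ mγ') (h.hl_mem _ a.2 _ b.2))
      (mul_mem (h.hr_mem _ ms _ mγ') (h.hr_mem _ a.2 _ b.2))
      (e1.symm.trans e2)).1
  case reduction =>
    intro a b
    funext x
    apply Subtype.ext
    set α := (a : Γ); set β := (b : Γ); set χ := (x : Γ)
    set s := (hl β α)⁻¹ * odot α β * hl β α with hs
    have ms : s ∈ B := bgd_A_mem h a.2 b.2
    show hr α β * ((hl β α)⁻¹ * χ * hl β α) * (hr α β)⁻¹
      = hr s β * ((hl β s)⁻¹ * χ * hl β s) * (hr s β)⁻¹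
    have hc : hl α β * hr β s = hr β s * hl α β :=
      h.comm _ (h.hl_mem _ a.2 _ b.2) _ (h.hr_mem _ b.2 _ ms)
    have e1 : β * (α * β)
        = ((hl s β)⁻¹ * odot β s * hl s β) * (hl β s * hl α β) * (hr β s * hr α β) := by
      calc β * (α * β) = (β * s) * (hl α β * hr α β) := by
            rw [bgd_mul (a := α) (b := β) h a.2 b.2, hs]; group
        _ = (((hl s β)⁻¹ * odot β s * hl s β) * hl β s * hr β s) * (hl α β * hr α β) := by
            rw [← bgd_mul h b.2 ms]
        _ = _ := bgd_rearr hc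
    have e2 : β * (α * β) = (β * α * β) * 1 * 1 := by group
    have key := bgd_key h (bgd_A_mem h b.2 ms)
      (mul_mem (h.hl_mem _ b.2 _ ms) (h.hl_mem _ a.2 _ b.2))
      (mul_mem (h.hr_mem _ b.2 _ ms) (h.hr_mem _ a.2 _ b.2))
      (h.twisted _ b.2 _ a.2) HL.one_mem HR.one_mem
      (e1.symm.trans e2)
    have e3 : hl β s = hl β α :=
      (eq_inv_of_mul_eq_one_left key.2.1).trans (h.hl_inv _ a.2 _ b.2)
    have e4 : hr β s = hr β α :=
      (eq_inv_of_mul_eq_one_left key.2.2).trans (h.hr_inv _ a.2 _ b.2)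
    have e5 : hr s β = hr α β := by
      rw [← h.hr_inv _ b.2 _ ms, e4, h.hr_inv _ b.2 _ a.2]
    rw [e3, e5]
end
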